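/- Set λ = (m+1)/2 and let g be the unique real polynomial with Q̂(x) = (x − λ)·g(x) (it exists since Q̂(λ) = 0). Then g(λ) = −2·P̂(λ) < 0. Moreover, for Z as in the context, the limit of (Z(r) − λ)/r as r → 0⁺ exists and equals 0. -/

import Mathlib

open Polynomial Set Filter Topology

set_option maxHeartbeats 1000000 in
/-- Lemma 3.10 of the paper: with λ = (m+1)/2 and Q̂ = (x−λ)·g,
one has g(λ) = −2·P̂(λ) < 0, and (Z(r) − λ)/r → 0 as r → 0⁺. -/
theorem stmt_8 (m : ℕ) (hm : 2 ≤ m)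
    (lam : Fin (m - 1) → ℝ) (hmono : Monotone lam) (hlt : ∀ i, lam i < 1)
    (P Q Phat Qhat : Polynomial ℝ)
    (hP : P = ∏ i : Fin (m - 1), (X - C (2 * lam i / ((m : ℝ) + 1))))
    (hQder : ∀ y : ℝ, (derivative Q).eval y = ((m : ℝ) + 1) * y * P.eval y)
    (hQval : Q.eval (2 / ((m : ℝ) + 1)) = 0)
    (hPhat : ∀ x : ℝ, x ≠ 0 → Phat.eval x = x ^ (m - 1) * P.eval (1 / x))
    (hQhat : ∀ x : ℝ, x ≠ 0 → Qhat.eval x = x ^ (m + 1) * Q.eval (1 / x))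
    (hQhatval : Qhat.eval (((m : ℝ) + 1) / 2) = 0)
    (hPhatpos : 0 < Phat.eval (((m : ℝ) + 1) / 2))
    (g : Polynomial ℝ)
    (hg : Qhat = (X - C (((m : ℝ) + 1) / 2)) * g)
    (Z : ℝ → ℝ)
    (hZan : ∃ c d : ℝ, Ioc (0 : ℝ) 1 ⊆ Ioo c d ∧ AnalyticOnNhd ℝ Z (Ioo c d))
    (hODE : ∀ r ∈ Ioc (0 : ℝ) 1,
      r * deriv Z r * Phat.eval (Z r) + Qhat.eval (Z r) = 0)
    (hZ1 : Z 1 = 0)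
    (hZ' : ∀ r ∈ Ioc (0 : ℝ) 1, deriv Z r < 0)
    (hZlim : Tendsto Z (𝓝[>] (0 : ℝ)) (𝓝 (((m : ℝ) + 1) / 2))) :
    g.eval (((m : ℝ) + 1) / 2) = -2 * Phat.eval (((m : ℝ) + 1) / 2) ∧
    g.eval (((m : ℝ) + 1) / 2) < 0 ∧
    Tendsto (fun r => (Z r - ((m : ℝ) + 1) / 2) / r) (𝓝[>] (0 : ℝ)) (𝓝 0) := by
  have hmR : (2:ℝ) ≤ (m:ℝ) := by exact_mod_cast hm
  set lam0 : ℝ := ((m:ℝ) + 1) / 2 with hlam0def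
  have hlam0pos : 0 < lam0 := by rw [hlam0def]; positivity
  have hlam0ne : lam0 ≠ 0 := ne_of_gt hlam0pos
  have hm1 : (m:ℝ) + 1 ≠ 0 := by positivity
  have hinv : 1 / lam0 = 2 / ((m:ℝ) + 1) := by
    rw [hlam0def]; field_simp
  have hQeval0 : Q.eval (1 / lam0) = 0 := by rw [hinv]; exact hQval
  -- Part 1: g(lam0) = -2 * Phat(lam0)
  have hev : (fun x => Qhat.eval x) =ᶠ[𝓝 lam0] (fun x => x ^ (m + 1) * Q.eval (1 / x)) := by
    filter_upwards [Ioi_mem_nhds hlam0pos] with x hx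
    exact hQhat x (ne_of_gt hx)
  have hf : HasDerivAt (fun x => x ^ (m + 1) * Q.eval (1 / x)) (-2 * Phat.eval lam0) lam0 := by
    have h1 : HasDerivAt (fun x : ℝ => x ^ (m + 1)) (((m:ℝ) + 1) * lam0 ^ m) lam0 := by
      simpa using hasDerivAt_pow (m + 1) lam0
    have hinv' : HasDerivAt (fun x : ℝ => 1 / x) (-(lam0 ^ 2)⁻¹) lam0 := by
      simpa [one_div] using hasDerivAt_inv hlam0ne
    have h2 : HasDerivAt (fun x : ℝ => Q.eval (1 / x))
        ((derivative Q).eval (1 / lam0) * -(lam0 ^ 2)⁻¹) lam0 :=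
      HasDerivAt.comp lam0 (Q.hasDerivAt (1 / lam0)) hinv'
    have h3 : HasDerivAt (fun x => x ^ (m + 1) * Q.eval (1 / x))
        (((m:ℝ) + 1) * lam0 ^ m * Q.eval (1 / lam0) + lam0 ^ (m + 1) *
          ((derivative Q).eval (1 / lam0) * -(lam0 ^ 2)⁻¹)) lam0 := h1.mul h2
    convert h3 using 1
    rw [hQeval0, hQder, hPhat lam0 hlam0ne]
    obtain ⟨k, rfl⟩ : ∃ k, m = k + 2 := ⟨m - 2, by omega⟩
    have h4 : k + 2 - 1 = k + 1 := by omega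
    have h5 : k + 2 + 1 = k + 3 := by omega
    rw [h4, h5]
    have hc : ((k:ℝ) + 2 + 1) = 2 * lam0 := by rw [hlam0def]; push_cast; ring
    push_cast
    rw [hc]
    field_simp
    ring
  have hQhatderiv : (derivative Qhat).eval lam0 = -2 * Phat.eval lam0 := by
    rw [← Polynomial.deriv, hev.deriv_eq]
    exact hf.deriv
  have hgval : g.eval lam0 = -2 * Phat.eval lam0 := by
    rw [← hQhatderiv, hg]
    simp [derivative_mul]
  have hgneg : g.eval lam0 < 0 := by
    rw [hgval]; nlinarith [hPhatpos]
  refine ⟨hgval, hgneg, ?_⟩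
  -- Part 3: the limit
  obtain ⟨c, d, hsub, han⟩ := hZan
  have hZdiff : ∀ r ∈ Ioc (0:ℝ) 1, DifferentiableAt ℝ Z r :=
    fun r hr => (han r (hsub hr)).differentiableAt
  have hZcont : ContinuousOn Z (Ioc (0:ℝ) 1) :=
    fun r hr => ((han r (hsub hr)).continuousAt).continuousWithinAt
  have hanti : StrictAntiOn Z (Ioc (0:ℝ) 1) := by
    apply strictAntiOn_of_deriv_neg (convex_Ioc 0 1) hZcont
    intro x hx
    rw [interior_Ioc] at hx
    exact hZ' x ⟨hx.1, hx.2.le⟩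
  have hZlt : ∀ r ∈ Ioc (0:ℝ) 1, Z r < lam0 := by
    intro r hr
    have hr2 : r / 2 ∈ Ioc (0:ℝ) 1 := ⟨by linarith [hr.1], by linarith [hr.2]⟩
    have h1 : Z r < Z (r / 2) := hanti hr2 hr (by linarith [hr.1])
    have h2 : Z (r / 2) ≤ lam0 := by
      refine ge_of_tendsto hZlim ?_
      filter_upwards [Ioo_mem_nhdsGT_of_mem
        (⟨le_refl (0:ℝ), by linarith [hr.1]⟩ : (0:ℝ) ∈ Ico (0:ℝ) (r / 2))] with s hs
      exact (hanti ⟨hs.1, by linarith [hs.2, hr.2]⟩ hr2 hs.2).le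
    linarith
  -- eventual bounds
  have hPtend : Tendsto (fun r => Phat.eval (Z r)) (𝓝[>] (0:ℝ)) (𝓝 (Phat.eval lam0)) :=
    (Phat.continuous.tendsto lam0).comp hZlim
  have hgtend : Tendsto (fun r => g.eval (Z r)) (𝓝[>] (0:ℝ)) (𝓝 (g.eval lam0)) :=
    (g.continuous.tendsto lam0).comp hZlim
  have e1 : ∀ᶠ r in 𝓝[>] (0:ℝ), 0 < Phat.eval (Z r) :=
    (tendsto_order.1 hPtend).1 0 hPhatpos
  have e2 : ∀ᶠ r in 𝓝[>] (0:ℝ), 3 / 2 * Phat.eval (Z r) ≤ -g.eval (Z r) := by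
    have ht : Tendsto (fun r => -g.eval (Z r) - 3 / 2 * Phat.eval (Z r)) (𝓝[>] (0:ℝ))
        (𝓝 (-g.eval lam0 - 3 / 2 * Phat.eval lam0)) :=
      hgtend.neg.sub (hPtend.const_mul (3 / 2))
    have hpos : 0 < -g.eval lam0 - 3 / 2 * Phat.eval lam0 := by
      rw [hgval]; nlinarith [hPhatpos]
    filter_upwards [(tendsto_order.1 ht).1 0 hpos] with r hr
    linarith
  obtain ⟨ε, hε, hball⟩ := Metric.mem_nhdsWithin_iff.1 (e1.and e2)
  set r₀ : ℝ := min (ε / 2) 1 with hr₀def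
  have hr₀pos : 0 < r₀ := by rw [hr₀def]; positivity
  have hr₀1 : r₀ ≤ 1 := min_le_right _ _
  have hsub01 : Ioc (0:ℝ) r₀ ⊆ Ioc (0:ℝ) 1 := fun x hx => ⟨hx.1, hx.2.trans hr₀1⟩
  have hcond : ∀ r ∈ Ioc (0:ℝ) r₀,
      0 < Phat.eval (Z r) ∧ 3 / 2 * Phat.eval (Z r) ≤ -g.eval (Z r) := by
    intro r hr
    apply hball
    constructor
    · rw [Metric.mem_ball, Real.dist_eq, sub_zero, abs_of_pos hr.1]
      have : r₀ ≤ ε / 2 := min_le_left _ _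
      linarith [hr.2]
    · exact hr.1
  -- the function u and its derivative
  set u : ℝ → ℝ := fun r => Real.log (lam0 - Z r) - 3 / 2 * Real.log r with hu_def
  have huderiv : ∀ s ∈ Ioc (0:ℝ) r₀,
      HasDerivAt u (-(deriv Z s) / (lam0 - Z s) - 3 / 2 * s⁻¹) s ∧
      0 ≤ -(deriv Z s) / (lam0 - Z s) - 3 / 2 * s⁻¹ := by
    intro s hs
    have hs01 : s ∈ Ioc (0:ℝ) 1 := hsub01 hs
    have hspos : 0 < s := hs.1
    have hA : 0 < lam0 - Z s := sub_pos.2 (hZlt s hs01)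
    have hPv : 0 < Phat.eval (Z s) := (hcond s hs).1
    have hgv : 3 / 2 * Phat.eval (Z s) ≤ -g.eval (Z s) := (hcond s hs).2
    constructor
    · have hd1 : HasDerivAt (fun r => lam0 - Z r) (-(deriv Z s)) s :=
        ((hZdiff s hs01).hasDerivAt).const_sub lam0
      have hd2 : HasDerivAt (fun r => Real.log (lam0 - Z r)) (-(deriv Z s) / (lam0 - Z s)) s :=
        hd1.log (ne_of_gt hA)
      have hd3 : HasDerivAt (fun r : ℝ => 3 / 2 * Real.log r) (3 / 2 * s⁻¹) s :=
        (Real.hasDerivAt_log (ne_of_gt hspos)).const_mul (3 / 2)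
      exact hd2.sub hd3
    · have hODEs := hODE s hs01
      have hQval' : Qhat.eval (Z s) = (Z s - lam0) * g.eval (Z s) := by
        rw [hg]; simp
      rw [hQval'] at hODEs
      -- s * Z' * Pv = (lam0 - Z s) * gv
      have hkey : s * deriv Z s * Phat.eval (Z s) = (lam0 - Z s) * g.eval (Z s) := by
        nlinarith [hODEs]
      rw [sub_nonneg, show (3:ℝ) / 2 * s⁻¹ = (3 / 2) / s from (div_eq_mul_inv _ _),
        div_le_div_iff₀ hspos hA]
      nlinarith [mul_le_mul_of_nonneg_left hgv hA.le, hkey, hPv]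
  -- monotonicity of u on Ioc 0 r₀
  have hr₀mem : r₀ ∈ Ioc (0:ℝ) r₀ := ⟨hr₀pos, le_refl _⟩
  have humono : ∀ r ∈ Ioc (0:ℝ) r₀, u r ≤ u r₀ := by
    intro r hr
    rcases eq_or_lt_of_le hr.2 with heq | hlt'
    · rw [heq]
    · have hIcc : Icc r r₀ ⊆ Ioc (0:ℝ) r₀ := fun x hx => ⟨lt_of_lt_of_le hr.1 hx.1, hx.2⟩
      have hcont : ContinuousOn u (Icc r r₀) := fun x hx =>
        ((huderiv x (hIcc hx)).1.continuousAt).continuousWithinAt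
      have hder : ∀ x ∈ Ioo r r₀,
          HasDerivAt u (-(deriv Z x) / (lam0 - Z x) - 3 / 2 * x⁻¹) x := fun x hx =>
        (huderiv x (hIcc ⟨hx.1.le, hx.2.le⟩)).1
      obtain ⟨c', hc', hceq⟩ := exists_hasDerivAt_eq_slope u
        (fun x => -(deriv Z x) / (lam0 - Z x) - 3 / 2 * x⁻¹) hlt' hcont hder
      have hge : 0 ≤ (u r₀ - u r) / (r₀ - r) := by
        rw [← hceq]
        exact (huderiv c' (hIcc ⟨hc'.1.le, hc'.2.le⟩)).2
      have := mul_nonneg hge (sub_pos.2 hlt').le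
      rwa [div_mul_cancel₀ _ (ne_of_gt (sub_pos.2 hlt')), sub_nonneg] at this
  -- the bound
  have hbound : ∀ r ∈ Ioc (0:ℝ) r₀,
      (lam0 - Z r) / r ≤ Real.exp (u r₀) * Real.exp (1 / 2 * Real.log r) := by
    intro r hr
    have hrpos : 0 < r := hr.1
    have hA : 0 < lam0 - Z r := sub_pos.2 (hZlt r (hsub01 hr))
    have h1 : Real.log (lam0 - Z r) ≤ u r₀ + 3 / 2 * Real.log r := by
      have h := humono r hr
      simp only [hu_def] at h ⊢
      linarith
    have h2 : lam0 - Z r ≤ Real.exp (u r₀ + 3 / 2 * Real.log r) := by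
      rw [← Real.exp_log hA]
      exact Real.exp_le_exp.2 h1
    have h3 : Real.exp (u r₀ + 3 / 2 * Real.log r) / r
        = Real.exp (u r₀) * Real.exp (1 / 2 * Real.log r) := by
      rw [Real.exp_add, mul_div_assoc]
      congr 1
      have hrr : Real.exp (3 / 2 * Real.log r) = Real.exp (1 / 2 * Real.log r) * r := by
        calc Real.exp (3 / 2 * Real.log r)
            = Real.exp (1 / 2 * Real.log r + Real.log r) := by ring_nf
          _ = Real.exp (1 / 2 * Real.log r) * Real.exp (Real.log r) := Real.exp_add _ _
          _ = Real.exp (1 / 2 * Real.log r) * r := by rw [Real.exp_log hrpos]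
      rw [hrr, mul_div_cancel_right₀ _ (ne_of_gt hrpos)]
    calc (lam0 - Z r) / r ≤ Real.exp (u r₀ + 3 / 2 * Real.log r) / r := by gcongr
      _ = Real.exp (u r₀) * Real.exp (1 / 2 * Real.log r) := h3
  -- the limit of the bound
  have hBtend : Tendsto (fun r => Real.exp (u r₀) * Real.exp (1 / 2 * Real.log r))
      (𝓝[>] (0:ℝ)) (𝓝 0) := by
    have h1 : Tendsto Real.log (𝓝[>] (0:ℝ)) atBot := Real.tendsto_log_nhdsGT_zero
    have h2 : Tendsto (fun r : ℝ => 1 / 2 * Real.log r) (𝓝[>] (0:ℝ)) atBot :=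
      (tendsto_const_mul_atBot_of_pos (by norm_num : (0:ℝ) < 1 / 2)).2 h1
    have h3 := Real.tendsto_exp_atBot.comp h2
    have h4 := h3.const_mul (Real.exp (u r₀))
    simpa using h4
  have hmain : Tendsto (fun r => (lam0 - Z r) / r) (𝓝[>] (0:ℝ)) (𝓝 0) := by
    have hmem : Ioc (0:ℝ) r₀ ∈ 𝓝[>] (0:ℝ) :=
      Ioc_mem_nhdsGT_of_mem ⟨le_refl (0:ℝ), hr₀pos⟩
    refine tendsto_of_tendsto_of_tendsto_of_le_of_le' tendsto_const_nhds hBtend ?_ ?_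
    · filter_upwards [hmem] with r hr
      exact div_nonneg (sub_pos.2 (hZlt r (hsub01 hr))).le hr.1.le
    · filter_upwards [hmem] with r hr
      exact hbound r hr
  have heq2 : (fun r => (Z r - lam0) / r) = fun r => -((lam0 - Z r) / r) := by
    funext r; ring
  rw [heq2]
  simpa using hmain.neg
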